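/- arXiv:1107.5282 — 2 statements merged into one kernel-verified Lean document; each statement's English description precedes it below -/
import Mathlib

section
/- Let m, n, c be positive integers with gcd(m,c) = gcd(n,c). Then T(m,n;c) = gcd(m,c)·∏_{p ∣ c/gcd(m,c)} p/(p−1), the product being over the primes p dividing c/gcd(m,c). -/
open ArithmeticFunction Finset
open scoped ArithmeticFunction.Moebius ArithmeticFunction.zeta

/-- Ramanujan's sum `c_q(n) = ∑_{d ∣ (q,n)} μ(q/d) d`. -/
def ramanujanSum (q n : ℕ) : ℤ :=
  ∑ d ∈ (Nat.gcd q n).divisors, (ArithmeticFunction.moebius (q / d) : ℤ) * (d : ℤ)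

/-- The arithmetic function `d ↦ d` if `d ∣ m`, else `0`. -/
def indicAF (m : ℕ) : ArithmeticFunction ℤ :=
  ⟨fun d => if d ∣ m then (d : ℤ) else 0, by simp⟩

lemma indicAF_mult (m : ℕ) : (indicAF m).IsMultiplicative := by
  constructor
  · simp [indicAF]
  · intro x y hxy
    show (if x * y ∣ m then ((x*y : ℕ) : ℤ) else 0)
        = (if x ∣ m then (x : ℤ) else 0) * (if y ∣ m then (y : ℤ) else 0)
    by_cases hx : x ∣ m
    · by_cases hy : y ∣ m
      · rw [if_pos (Nat.Coprime.mul_dvd_of_dvd_of_dvd hxy hx hy), if_pos hx, if_pos hy]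
        push_cast; ring
      · rw [if_neg (fun hd => hy ((dvd_mul_left y x).trans hd)), if_neg hy, mul_zero]
    · rw [if_neg (fun hd => hx ((dvd_mul_right x y).trans hd)), if_neg hx, zero_mul]

lemma ramanujanSum_eq_conv (m q : ℕ) : (indicAF m * (μ : ArithmeticFunction ℤ)) q = ramanujanSum q m := by
  rcases eq_or_ne q 0 with rfl | hq
  · simp [ramanujanSum]
  · rw [mul_apply, Nat.sum_divisorsAntidiagonal (fun a b => indicAF m a * (μ b : ℤ))]
    have hfil : (Nat.gcd q m).divisors = q.divisors.filter (· ∣ m) := by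
      ext d
      simp only [Nat.mem_divisors, Finset.mem_filter]
      constructor
      · intro ⟨hd, _⟩
        exact ⟨⟨(Nat.dvd_gcd_iff.1 hd).1, hq⟩, (Nat.dvd_gcd_iff.1 hd).2⟩
      · intro ⟨⟨h1, _⟩, h2⟩
        exact ⟨Nat.dvd_gcd h1 h2, fun hg => hq (Nat.eq_zero_of_gcd_eq_zero_left hg)⟩
    rw [ramanujanSum, hfil, Finset.sum_filter]
    apply Finset.sum_congr rfl
    intro d _
    show (indicAF m) d * (μ (q / d) : ℤ) = if d ∣ m then (μ (q / d) : ℤ) * d else 0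
    by_cases hd : d ∣ m <;> simp [indicAF, hd, mul_comm]

lemma ramanujanSum_mul (m : ℕ) {x y : ℕ} (hxy : x.Coprime y) :
    ramanujanSum (x * y) m = ramanujanSum x m * ramanujanSum y m := by
  rw [← ramanujanSum_eq_conv, ← ramanujanSum_eq_conv, ← ramanujanSum_eq_conv]
  exact ((indicAF_mult m).mul isMultiplicative_moebius).map_mul_of_coprime hxy

/-- `T(m,n;c) = ∑_{u ∣ c} φ(u)⁻¹ c_u(m) c_u(n)`. -/
noncomputable def Tsum (m n c : ℕ) : ℝ :=
  ∑ u ∈ c.divisors, ((Nat.totient u : ℝ))⁻¹ * (ramanujanSum u m : ℝ) * (ramanujanSum u n : ℝ)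


/-- summand of `T` as an arithmetic function of `u`. -/
noncomputable def hAF (m : ℕ) : ArithmeticFunction ℝ :=
  ⟨fun u => ((u.totient : ℝ))⁻¹ * (ramanujanSum u m : ℝ) * (ramanujanSum u m : ℝ), by simp⟩

lemma ramanujanSum_one (m : ℕ) : ramanujanSum 1 m = 1 := by
  simp [ramanujanSum]

lemma hAF_mult (m : ℕ) : (hAF m).IsMultiplicative := by
  constructor
  · show ((Nat.totient 1 : ℝ))⁻¹ * _ * _ = 1
    simp [ramanujanSum_one]
  · intro x y hxy
    show ((Nat.totient (x*y) : ℝ))⁻¹ * _ * _ = _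
    rw [Nat.totient_mul hxy, ramanujanSum_mul m hxy]
    show _ = ((Nat.totient x : ℝ))⁻¹ * _ * _ * (((Nat.totient y : ℝ))⁻¹ * _ * _)
    push_cast
    rw [mul_inv]
    ring

lemma gcd_mul_of_coprime {m x y : ℕ} (hxy : Nat.Coprime x y) :
    Nat.gcd m (x * y) = Nat.gcd m x * Nat.gcd m y := by
  refine Nat.dvd_antisymm ?_ ?_
  · have h1 : Nat.gcd (Nat.gcd m (x*y)) x * Nat.gcd (Nat.gcd m (x*y)) y = Nat.gcd m (x*y) :=
      (Nat.gcd_mul_gcd_eq_iff_dvd_mul_of_coprime hxy).2 (Nat.gcd_dvd_right _ _)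
    rw [← h1]
    exact Nat.mul_dvd_mul
      (Nat.dvd_gcd ((Nat.gcd_dvd_left _ _).trans (Nat.gcd_dvd_left m (x*y))) (Nat.gcd_dvd_right _ _))
      (Nat.dvd_gcd ((Nat.gcd_dvd_left _ _).trans (Nat.gcd_dvd_left m (x*y))) (Nat.gcd_dvd_right _ _))
  · have hcop : Nat.Coprime (Nat.gcd m x) (Nat.gcd m y) :=
      Nat.Coprime.coprime_dvd_left (Nat.gcd_dvd_right m x)
        (Nat.Coprime.coprime_dvd_right (Nat.gcd_dvd_right m y) hxy)
    exact Nat.dvd_gcd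
      (Nat.Coprime.mul_dvd_of_dvd_of_dvd hcop (Nat.gcd_dvd_left m x) (Nat.gcd_dvd_left m y))
      (Nat.mul_dvd_mul (Nat.gcd_dvd_right m x) (Nat.gcd_dvd_right m y))

/-- right-hand side as an arithmetic function of `c`. -/
noncomputable def gAF (m : ℕ) : ArithmeticFunction ℝ :=
  ⟨fun c => if c = 0 then 0 else
    (Nat.gcd m c : ℝ) * ∏ p ∈ (c / Nat.gcd m c).primeFactors, (p : ℝ) / ((p : ℝ) - 1), by simp⟩

lemma gAF_apply (m c : ℕ) (hc : c ≠ 0) :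
    gAF m c = (Nat.gcd m c : ℝ) * ∏ p ∈ (c / Nat.gcd m c).primeFactors, (p : ℝ) / ((p : ℝ) - 1) :=
  if_neg hc

lemma gAF_mult (m : ℕ) : (gAF m).IsMultiplicative := by
  rw [ArithmeticFunction.IsMultiplicative.iff_ne_zero]
  constructor
  · rw [gAF_apply m 1 one_ne_zero]
    simp
  · intro x y hx hy hxy
    rw [gAF_apply m _ (mul_ne_zero hx hy), gAF_apply m x hx, gAF_apply m y hy,
      gcd_mul_of_coprime hxy]
    have hdx := Nat.gcd_dvd_right m x
    have hdy := Nat.gcd_dvd_right m y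
    have hdiv : x * y / (Nat.gcd m x * Nat.gcd m y) = (x / Nat.gcd m x) * (y / Nat.gcd m y) :=
      (Nat.div_mul_div_comm hdx hdy).symm
    have hgx : Nat.gcd m x ≠ 0 := fun h0 => hx (Nat.eq_zero_of_gcd_eq_zero_right h0)
    have hgy : Nat.gcd m y ≠ 0 := fun h0 => hy (Nat.eq_zero_of_gcd_eq_zero_right h0)
    have hx' : x / Nat.gcd m x ≠ 0 := (Nat.div_ne_zero_iff_of_dvd hdx).2 ⟨hx, hgx⟩
    have hy' : y / Nat.gcd m y ≠ 0 := (Nat.div_ne_zero_iff_of_dvd hdy).2 ⟨hy, hgy⟩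
    have hcop' : Nat.Coprime (x / Nat.gcd m x) (y / Nat.gcd m y) :=
      Nat.Coprime.coprime_dvd_left (Nat.div_dvd_of_dvd hdx)
        (Nat.Coprime.coprime_dvd_right (Nat.div_dvd_of_dvd hdy) hxy)
    rw [hdiv, Nat.primeFactors_mul hx' hy', Finset.prod_union hcop'.disjoint_primeFactors]
    push_cast
    ring


lemma gcd_prime_pow {p m : ℕ} (hp : p.Prime) (hm : m ≠ 0) (k : ℕ) :
    Nat.gcd m (p ^ k) = p ^ (min (m.factorization p) k) := by
  refine Nat.dvd_antisymm ?_ (Nat.dvd_gcd ?_ (pow_dvd_pow p (min_le_right _ _)))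
  · obtain ⟨j, hj, hje⟩ := (Nat.dvd_prime_pow hp).1 (Nat.gcd_dvd_right m (p ^ k))
    rw [hje]
    apply pow_dvd_pow
    refine le_min ?_ hj
    rw [← Nat.Prime.pow_dvd_iff_le_factorization hp hm, ← hje]
    exact Nat.gcd_dvd_left m (p ^ k)
  · exact (Nat.Prime.pow_dvd_iff_le_factorization hp hm).2 (min_le_left _ _)

lemma rs_pp {p : ℕ} (hp : p.Prime) {m : ℕ} (hm : m ≠ 0) (j : ℕ) :
    ramanujanSum (p ^ j) m =
      if j ≤ m.factorization p then ((p ^ j : ℕ).totient : ℤ)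
      else if j = m.factorization p + 1 then -((p : ℤ) ^ m.factorization p)
      else 0 := by
  set a := m.factorization p with ha
  have hg : Nat.gcd (p ^ j) m = p ^ (min a j) := by
    rw [Nat.gcd_comm, gcd_prime_pow hp hm j]
  have hsum : ramanujanSum (p ^ j) m
      = ∑ i ∈ range (min a j + 1), (μ (p ^ (j - i)) : ℤ) * (p ^ i : ℕ) := by
    rw [ramanujanSum, hg, Nat.sum_divisors_prime_pow hp]
    refine Finset.sum_congr rfl fun i hi => ?_
    rw [Finset.mem_range] at hi
    have hij : i ≤ j := le_trans (by omega) (min_le_right a j)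
    rw [Nat.pow_div hij hp.pos]
  have hmz : ∀ s : ℕ, s ≠ 0 → s ≠ 1 → (μ (p ^ s) : ℤ) = 0 := fun s h0 h1 => by
    rw [moebius_apply_prime_pow hp h0, if_neg h1]
  rcases le_or_gt j a with hja | haj
  · -- j ≤ a : value is φ(p^j)
    rw [if_pos hja, hsum, min_eq_right hja]
    rcases Nat.eq_zero_or_pos j with rfl | hj0
    · simp
    · obtain ⟨t, rfl⟩ : ∃ t, j = t + 1 := ⟨j - 1, by omega⟩
      rw [Finset.sum_range_succ, Finset.sum_range_succ]
      have hrest : ∀ i ∈ range t, (μ (p ^ (t + 1 - i)) : ℤ) * ((p ^ i : ℕ) : ℤ) = 0 := by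
        intro i hi
        rw [Finset.mem_range] at hi
        rw [hmz _ (by omega) (by omega), zero_mul]
      rw [Finset.sum_eq_zero hrest]
      have e1 : t + 1 - t = 1 := by omega
      have e2 : t + 1 - (t + 1) = 0 := by omega
      rw [e1, e2, pow_one, pow_zero, moebius_apply_prime hp, moebius_apply_one,
        Nat.totient_prime_pow hp t.succ_pos, Nat.succ_sub_one, Nat.cast_mul, Nat.cast_pow,
        Nat.cast_sub hp.one_le, Nat.cast_one]
      push_cast
      ring
  · rw [if_neg (by omega)]
    rcases eq_or_ne j (a + 1) with rfl | hne
    · rw [if_pos rfl, hsum, min_eq_left (by omega), Finset.sum_range_succ]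
      have hrest : ∀ i ∈ range a, (μ (p ^ (a + 1 - i)) : ℤ) * ((p ^ i : ℕ) : ℤ) = 0 := by
        intro i hi
        rw [Finset.mem_range] at hi
        rw [hmz _ (by omega) (by omega), zero_mul]
      rw [Finset.sum_eq_zero hrest]
      have e1 : a + 1 - a = 1 := by omega
      rw [e1, pow_one, moebius_apply_prime hp]
      push_cast
      ring
    · rw [if_neg hne, hsum, min_eq_left (by omega)]
      refine Finset.sum_eq_zero fun i hi => ?_
      rw [Finset.mem_range] at hi
      rw [hmz _ (by omega) (by omega), zero_mul]


lemma hAF_apply (m u : ℕ) :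
    hAF m u = ((u.totient : ℝ))⁻¹ * (ramanujanSum u m : ℝ) * (ramanujanSum u m : ℝ) := rfl

lemma totient_pp_cast {p : ℕ} (hp : p.Prime) (t : ℕ) :
    (((p ^ (t + 1)).totient : ℝ)) = (p : ℝ) ^ t * ((p : ℝ) - 1) := by
  rw [Nat.totient_prime_pow hp t.succ_pos, Nat.succ_sub_one, Nat.cast_mul, Nat.cast_pow,
    Nat.cast_sub hp.one_le, Nat.cast_one]

lemma sum_totient_pp {p : ℕ} (hp : p.Prime) (t : ℕ) :
    ∑ j ∈ range (t + 1), (((p ^ j).totient : ℝ)) = (p : ℝ) ^ t := by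
  have h1 : ∑ j ∈ range (t + 1), (p ^ j).totient = p ^ t := by
    have := Nat.sum_totient (p ^ t)
    rwa [Nat.sum_divisors_prime_pow hp] at this
  exact_mod_cast congrArg (Nat.cast : ℕ → ℝ) h1

lemma FF_eq_gAF_pp (m : ℕ) (hm : m ≠ 0) {p : ℕ} (hp : p.Prime) (k : ℕ) :
    (↑(ζ : ArithmeticFunction ℕ) * hAF m) (p ^ k) = gAF m (p ^ k) := by
  rw [coe_zeta_mul_apply, Nat.sum_divisors_prime_pow hp,
    gAF_apply m _ (pow_ne_zero k hp.pos.ne')]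
  set a := m.factorization p with ha
  have hgcd : Nat.gcd m (p ^ k) = p ^ (min a k) := gcd_prime_pow hp hm k
  have hp0 : (p : ℝ) ≠ 0 := Nat.cast_ne_zero.2 hp.pos.ne'
  have hp1 : (p : ℝ) - 1 ≠ 0 := by
    have : (1 : ℝ) < (p : ℝ) := by exact_mod_cast hp.one_lt
    linarith
  have hterm : ∀ j, j ≤ a → hAF m (p ^ j) = ((p ^ j).totient : ℝ) := by
    intro j hj
    rw [hAF_apply, rs_pp hp hm j, if_pos hj]
    have hφ : ((p ^ j).totient : ℝ) ≠ 0 :=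
      Nat.cast_ne_zero.2 (Nat.totient_pos.2 (pow_pos hp.pos j)).ne'
    push_cast
    push_cast at hφ
    rw [inv_mul_cancel₀ hφ, one_mul]
  rcases le_or_gt k a with hka | hak
  · rw [hgcd, min_eq_right hka, Nat.div_self (pow_pos hp.pos k), Nat.primeFactors_one,
      Finset.prod_empty, mul_one]
    rw [Finset.sum_congr rfl (fun j hj => hterm j (by
      rw [Finset.mem_range] at hj; omega)), sum_totient_pp hp k]
    push_cast
    ring
  · have hka' : a ≤ k := hak.le
    rw [hgcd, min_eq_left hka', Nat.pow_div hka' hp.pos,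
      Nat.primeFactors_prime_pow (by omega : k - a ≠ 0) hp, Finset.prod_singleton]
    have hzero : ∀ j ∈ range (k + 1), j ∉ range (a + 2) → hAF m (p ^ j) = 0 := by
      intro j _ hj
      rw [Finset.mem_range, not_lt] at hj
      rw [hAF_apply, rs_pp hp hm j, if_neg (by omega), if_neg (by omega)]
      simp
    rw [← Finset.sum_subset (Finset.range_subset_range.2 (by omega : a + 2 ≤ k + 1)) hzero,
      Finset.sum_range_succ]
    rw [Finset.sum_congr rfl (fun j hj => hterm j (by
      rw [Finset.mem_range] at hj; omega)), sum_totient_pp hp a, hAF_apply, rs_pp hp hm (a + 1),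
      if_neg (by omega), if_pos rfl, totient_pp_cast hp a]
    have hpa : (p : ℝ) ^ a ≠ 0 := pow_ne_zero _ hp0
    push_cast
    field_simp
    ring


theorem Tsum_eq_of_gcd_eq
    (m n c : ℕ) (hm : 0 < m) (hn : 0 < n) (hc : 0 < c)
    (h : Nat.gcd m c = Nat.gcd n c) :
    Tsum m n c = (Nat.gcd m c : ℝ) *
      ∏ p ∈ (c / Nat.gcd m c).primeFactors, (p : ℝ) / ((p : ℝ) - 1) := by
  have hFG : (↑(ζ : ArithmeticFunction ℕ) * hAF m) = gAF m :=
    (ArithmeticFunction.IsMultiplicative.eq_iff_eq_on_prime_powers _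
      ((isMultiplicative_zeta.natCast).mul (hAF_mult m)) _ (gAF_mult m)).2
      fun p i hp => FF_eq_gAF_pp m hm.ne' hp i
  have h1 : Tsum m n c = (↑(ζ : ArithmeticFunction ℕ) * hAF m) c := by
    rw [coe_zeta_mul_apply, Tsum]
    refine Finset.sum_congr rfl fun u hu => ?_
    have huc : u ∣ c := (Nat.mem_divisors.1 hu).1
    have hg : Nat.gcd u n = Nat.gcd u m := by
      have e : ∀ x : ℕ, Nat.gcd u x = Nat.gcd u (Nat.gcd x c) := fun x =>
        Nat.dvd_antisymm
          (Nat.dvd_gcd (Nat.gcd_dvd_left u x)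
            (Nat.dvd_gcd (Nat.gcd_dvd_right u x) ((Nat.gcd_dvd_left u x).trans huc)))
          (Nat.dvd_gcd (Nat.gcd_dvd_left _ _)
            ((Nat.gcd_dvd_right _ _).trans (Nat.gcd_dvd_left x c)))
      rw [e m, e n, h]
    have hrs : ramanujanSum u n = ramanujanSum u m := by
      unfold ramanujanSum; rw [hg]
    rw [hAF_apply, hrs]
  rw [h1, hFG, gAF_apply m c hc.ne']
end

section
/- Let p be a prime, k a positive integer, and m, n positive integers; write a = v_p(m) and b = v_p(n) for the p-adic valuations of m and n. Then: T(m,n;p^k) = p^k if k ≤ min(a,b); T(m,n;p^k) = p^a·p/(p−1) if a = b < k; and T(m,n;p^k) = 0 if min(a,b) < k and a ≠ b. -/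
open ArithmeticFunction

lemma gcd_prime_pow_s13 {p : ℕ} (hp : p.Prime) (j n : ℕ) (hn : n ≠ 0) :
    Nat.gcd (p ^ j) n = p ^ (min j (padicValNat p n)) := by
  haveI : Fact p.Prime := ⟨hp⟩
  apply Nat.dvd_antisymm
  · obtain ⟨i, hij, hi⟩ := (Nat.dvd_prime_pow hp).1 (Nat.gcd_dvd_left (p ^ j) n)
    rw [hi]
    apply pow_dvd_pow
    refine le_min hij ?_
    rw [← padicValNat_dvd_iff_le hn, ← hi]
    exact Nat.gcd_dvd_right _ _
  · exact Nat.dvd_gcd (pow_dvd_pow _ (min_le_left _ _))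
      ((padicValNat_dvd_iff_le hn).2 (min_le_right _ _))

lemma ramanujanSum_prime_pow_eq {p : ℕ} (hp : p.Prime) (j n : ℕ) (hn : n ≠ 0) :
    ramanujanSum (p ^ j) n =
      ∑ i ∈ Finset.range (min j (padicValNat p n) + 1), (ArithmeticFunction.moebius (p ^ (j - i)) : ℤ) * (p : ℤ) ^ i := by
  unfold ramanujanSum
  rw [gcd_prime_pow_s13 hp j n hn, Nat.sum_divisors_prime_pow hp]
  refine Finset.sum_congr rfl fun i hi => ?_
  have hij : i ≤ j := le_trans (Nat.lt_succ_iff.1 (Finset.mem_range.1 hi)) (min_le_left _ _)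
  rw [Nat.pow_div hij hp.pos, Nat.cast_pow]

lemma rs_le {p : ℕ} (hp : p.Prime) {j n : ℕ} (hn : n ≠ 0) (h : j ≤ padicValNat p n) :
    ramanujanSum (p ^ j) n = (Nat.totient (p ^ j) : ℤ) := by
  rw [ramanujanSum_prime_pow_eq hp j n hn, min_eq_left h]
  rcases Nat.eq_zero_or_pos j with rfl | hj
  · simp
  obtain ⟨t, rfl⟩ : ∃ t, j = t + 1 := ⟨j - 1, by omega⟩
  rw [Finset.sum_range_succ, Finset.sum_range_succ]
  rw [Finset.sum_eq_zero, Nat.totient_prime_pow hp hj]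
  · have h1 : t + 1 - t = 1 := by omega
    have h2 : t + 1 - (t + 1) = 0 := by omega
    rw [h1, h2, pow_one, pow_zero, moebius_apply_prime hp, moebius_apply_one]
    push_cast [Nat.cast_sub hp.one_le]
    ring
  · intro i hi
    have hi' : i < t := Finset.mem_range.1 hi
    rw [moebius_apply_prime_pow hp (by omega), if_neg (by omega), zero_mul]

lemma rs_succ {p : ℕ} (hp : p.Prime) {j n : ℕ} (hn : n ≠ 0) (h : j = padicValNat p n + 1) :
    ramanujanSum (p ^ j) n = -(p : ℤ) ^ padicValNat p n := by
  set a := padicValNat p n with ha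
  rw [ramanujanSum_prime_pow_eq hp j n hn, min_eq_right (by omega), Finset.sum_range_succ,
    Finset.sum_eq_zero, h]
  · have : a + 1 - a = 1 := by omega
    rw [this, pow_one, moebius_apply_prime hp]
    ring
  · intro i hi
    have hi' : i < a := Finset.mem_range.1 hi
    rw [moebius_apply_prime_pow hp (by omega), if_neg (by omega), zero_mul]

lemma rs_big {p : ℕ} (hp : p.Prime) {j n : ℕ} (hn : n ≠ 0) (h : padicValNat p n + 1 < j) :
    ramanujanSum (p ^ j) n = 0 := by
  rw [ramanujanSum_prime_pow_eq hp j n hn, min_eq_right (by omega)]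
  refine Finset.sum_eq_zero fun i hi => ?_
  have hi' : i < padicValNat p n + 1 := Finset.mem_range.1 hi
  rw [moebius_apply_prime_pow hp (by omega), if_neg (by omega), zero_mul]

lemma sum_totient_pow {p : ℕ} (hp : p.Prime) (k : ℕ) :
    ∑ i ∈ Finset.range (k + 1), (Nat.totient (p ^ i) : ℝ) = (p : ℝ) ^ k := by
  have := Nat.sum_totient (p ^ k)
  rw [Nat.sum_divisors_prime_pow hp] at this
  exact_mod_cast congrArg (Nat.cast : ℕ → ℝ) this


lemma Tsum_eq {p : ℕ} (hp : p.Prime) (k m n : ℕ) :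
    Tsum m n (p ^ k) = ∑ i ∈ Finset.range (k + 1),
      ((Nat.totient (p ^ i) : ℝ))⁻¹ * (ramanujanSum (p ^ i) m : ℝ) *
        (ramanujanSum (p ^ i) n : ℝ) := by
  rw [Tsum, Nat.sum_divisors_prime_pow hp]

lemma tot_ne {p : ℕ} (hp : p.Prime) (i : ℕ) : ((Nat.totient (p ^ i)) : ℝ) ≠ 0 :=
  Nat.cast_ne_zero.2 (Nat.totient_pos.2 (pow_pos hp.pos i)).ne'

lemma Tsum_comm (m n c : ℕ) : Tsum m n c = Tsum n m c :=
  Finset.sum_congr rfl fun u _ => by ring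

lemma Tsum_zero_of_lt {p : ℕ} (hp : p.Prime) {k m n : ℕ} (hm : m ≠ 0) (hn : n ≠ 0)
    (hab : padicValNat p m < padicValNat p n) (hak : padicValNat p m < k) :
    Tsum m n (p ^ k) = 0 := by
  set a := padicValNat p m with ha
  rw [Tsum_eq hp]
  have hsub : Finset.range (a + 2) ⊆ Finset.range (k + 1) :=
    Finset.range_subset_range.2 (by omega)
  rw [← Finset.sum_subset hsub (fun i hi hni => ?_)]
  · rw [Finset.sum_range_succ]
    have h1 : ∑ i ∈ Finset.range (a + 1),
        ((Nat.totient (p ^ i) : ℝ))⁻¹ * (ramanujanSum (p ^ i) m : ℝ) *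
          (ramanujanSum (p ^ i) n : ℝ) = ∑ i ∈ Finset.range (a + 1),
            (Nat.totient (p ^ i) : ℝ) := by
      refine Finset.sum_congr rfl fun i hi => ?_
      have hi' : i ≤ a := by have := Finset.mem_range.1 hi; omega
      rw [rs_le hp hm hi', rs_le hp hn (by omega), Int.cast_natCast]
      field_simp
    rw [h1, sum_totient_pow hp a, rs_succ hp hm rfl, rs_le hp hn (by omega),
      Int.cast_natCast, Int.cast_neg, Int.cast_pow, Int.cast_natCast]
    have := tot_ne hp (a + 1)
    field_simp
    simp [ha]
  · have hi' : a + 1 < i := by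
      have := Finset.mem_range.1 hi
      have h2 : ¬ i < a + 2 := fun h => hni (Finset.mem_range.2 h)
      omega
    rw [rs_big hp hm hi', Int.cast_zero, mul_zero, zero_mul]


lemma Tsum_case1 {p : ℕ} (hp : p.Prime) {k m n : ℕ} (hm : m ≠ 0) (hn : n ≠ 0)
    (h : k ≤ min (padicValNat p m) (padicValNat p n)) :
    Tsum m n (p ^ k) = (p : ℝ) ^ k := by
  rw [Tsum_eq hp, ← sum_totient_pow hp k]
  refine Finset.sum_congr rfl fun i hi => ?_
  have hi' : i ≤ k := by have := Finset.mem_range.1 hi; omega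
  rw [rs_le hp hm (by omega), rs_le hp hn (by omega), Int.cast_natCast]
  field_simp

lemma Tsum_case2 {p : ℕ} (hp : p.Prime) {k m n : ℕ} (hm : m ≠ 0) (hn : n ≠ 0)
    (hab : padicValNat p m = padicValNat p n) (hak : padicValNat p m < k) :
    Tsum m n (p ^ k) = (p : ℝ) ^ (padicValNat p m) * ((p : ℝ) / ((p : ℝ) - 1)) := by
  set a := padicValNat p m with ha
  rw [Tsum_eq hp]
  have hsub : Finset.range (a + 2) ⊆ Finset.range (k + 1) :=
    Finset.range_subset_range.2 (by omega)
  rw [← Finset.sum_subset hsub (fun i hi hni => ?_)]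
  · rw [Finset.sum_range_succ]
    have h1 : ∑ i ∈ Finset.range (a + 1),
        ((Nat.totient (p ^ i) : ℝ))⁻¹ * (ramanujanSum (p ^ i) m : ℝ) *
          (ramanujanSum (p ^ i) n : ℝ) = ∑ i ∈ Finset.range (a + 1),
            (Nat.totient (p ^ i) : ℝ) := by
      refine Finset.sum_congr rfl fun i hi => ?_
      have hi' : i ≤ a := by have := Finset.mem_range.1 hi; omega
      rw [rs_le hp hm hi', rs_le hp hn (by omega), Int.cast_natCast]
      field_simp
    rw [h1, sum_totient_pow hp a, rs_succ hp hm rfl, rs_succ hp hn (by omega),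
      Int.cast_neg, Int.cast_pow, Int.cast_natCast, ← hab]
    rw [Nat.totient_prime_pow hp (Nat.succ_pos a)]
    have hne : ((p : ℝ) - 1) ≠ 0 := by
      have : (1 : ℝ) < p := by exact_mod_cast hp.one_lt
      linarith
    have hpne : (p : ℝ) ≠ 0 := Nat.cast_ne_zero.2 hp.pos.ne'
    push_cast [Nat.cast_sub hp.one_le]
    have hppow : (p : ℝ) ^ a ≠ 0 := pow_ne_zero _ hpne
    field_simp
    ring
  · have hi' : a + 1 < i := by
      have := Finset.mem_range.1 hi
      have h2 : ¬ i < a + 2 := fun h => hni (Finset.mem_range.2 h)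
      omega
    rw [rs_big hp hm hi', Int.cast_zero, mul_zero, zero_mul]

theorem Tsum_prime_pow
    (p : ℕ) (hp : p.Prime) (k : ℕ) (hk : 0 < k)
    (m n : ℕ) (hm : 0 < m) (hn : 0 < n) :
    (k ≤ min (padicValNat p m) (padicValNat p n) → Tsum m n (p ^ k) = (p : ℝ) ^ k) ∧
      (padicValNat p m = padicValNat p n → padicValNat p m < k →
        Tsum m n (p ^ k) = (p : ℝ) ^ (padicValNat p m) * ((p : ℝ) / ((p : ℝ) - 1))) ∧
      (min (padicValNat p m) (padicValNat p n) < k →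
        padicValNat p m ≠ padicValNat p n → Tsum m n (p ^ k) = 0) := by
  refine ⟨fun h => Tsum_case1 hp hm.ne' hn.ne' h,
    fun hab hak => Tsum_case2 hp hm.ne' hn.ne' hab hak, fun hmin hab => ?_⟩
  rcases Nat.lt_or_ge (padicValNat p m) (padicValNat p n) with h | h
  · exact Tsum_zero_of_lt hp hm.ne' hn.ne' h (by omega)
  · have h' : padicValNat p n < padicValNat p m := by omega
    rw [Tsum_comm]
    exact Tsum_zero_of_lt hp hn.ne' hm.ne' h' (by omega)
end
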